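/- Let E be an infinite-dimensional reflexive real Banach space with the Kadec-Klee property and let φ ∈ E* be nonzero. Then the set Ψ(φ) = {x ∈ E : ‖x‖ = 1 and φ(x) = ‖φ‖_{E*}} is compact in the norm topology. -/

import Mathlib

open NormedSpace Filter Topology Set Metric

section helpers
variable {X : Type*} [TopologicalSpace X]

lemma myClusEq [T2Space X] {u : ℕ → X} {c L : X} (h : MapClusterPt c atTop u)
    (h' : Tendsto u atTop (𝓝 L)) : c = L :=
  eq_of_nhds_neBot (h.clusterPt.mono h')

lemma myClusMem {u : ℕ → X} {c : X} {C : Set X} (hC : IsClosed C)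
    (hu : ∀ n, u n ∈ C) (h : MapClusterPt c atTop u) : c ∈ C := by
  have h2 : Filter.map u atTop ≤ 𝓟 C :=
    le_principal_iff.mpr (Filter.mem_map.mpr (Filter.Eventually.of_forall hu))
  have : ClusterPt c (𝓟 C) := h.clusterPt.mono h2
  exact hC.closure_eq ▸ mem_closure_iff_clusterPt.mpr this

end helpers

lemma myKey (E : Type*) [NormedAddCommGroup E] [NormedSpace ℝ E]
    (hrefl : Function.Surjective (inclusionInDoubleDual ℝ E)) :
    ∀ u : ℕ → E, (∀ n, ‖u n‖ ≤ 1) →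
      ∃ y : E, ‖y‖ ≤ 1 ∧ ∀ ψ : StrongDual ℝ E, MapClusterPt (ψ y) atTop (fun n => ψ (u n)) := by
  intro u hu
  set J := inclusionInDoubleDual ℝ E with hJ
  set v : ℕ → WeakDual ℝ (StrongDual ℝ E) := fun n => StrongDual.toWeakDual (J (u n)) with hv
  have hmem : ∀ n, v n ∈ WeakDual.toStrongDual ⁻¹' Metric.closedBall 0 1 := by
    intro n
    simp only [Set.mem_preimage, Metric.mem_closedBall, dist_zero_right]
    calc dist (WeakDual.toStrongDual (v n)) 0 = ‖WeakDual.toStrongDual (v n)‖ := dist_zero_right (WeakDual.toStrongDual (v n))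
      _ = ‖J (u n)‖ := rfl
      _ ≤ ‖u n‖ := double_dual_bound ℝ E (u n)
      _ ≤ 1 := hu n
  have hle : Filter.map v atTop ≤ 𝓟 (WeakDual.toStrongDual ⁻¹' Metric.closedBall 0 1) :=
    le_principal_iff.mpr (Filter.mem_map.mpr (Filter.Eventually.of_forall hmem))
  obtain ⟨Λ, hΛB, hclus⟩ :=
    (WeakDual.isCompact_closedBall (𝕜 := ℝ) (E := StrongDual ℝ E) 0 1).exists_mapClusterPt hle
  obtain ⟨y, hy⟩ := hrefl (WeakDual.toStrongDual Λ)
  have hnorm : ‖y‖ ≤ 1 := by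
    apply norm_le_dual_bound ℝ y zero_le_one
    intro f
    have : f y = Λ f := by
      have h5 := DFunLike.congr_fun hy f
      rw [NormedSpace.dual_def, WeakDual.toStrongDual_apply] at h5
      exact h5
    rw [this, one_mul]
    calc ‖Λ f‖ ≤ ‖WeakDual.toStrongDual Λ‖ * ‖f‖ := ContinuousLinearMap.le_opNorm _ f
      _ ≤ 1 * ‖f‖ := by
          apply mul_le_mul_of_nonneg_right _ (norm_nonneg f)
          simpa [dist_zero_right] using hΛB
      _ = ‖f‖ := one_mul _
  refine ⟨y, hnorm, fun ψ => ?_⟩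
  have hcont : Continuous fun Λ' : WeakDual ℝ (StrongDual ℝ E) => Λ' ψ := WeakDual.eval_continuous ψ
  have h2 := hclus.continuousAt_comp hcont.continuousAt
  have hΛψ : Λ ψ = ψ y := by
    have h5 := DFunLike.congr_fun hy ψ
    rw [NormedSpace.dual_def, WeakDual.toStrongDual_apply] at h5
    exact h5.symm
  rw [hΛψ] at h2
  convert h2 using 1
  rfl

theorem stmt3 (E : Type*) [NormedAddCommGroup E] [NormedSpace ℝ E] [CompleteSpace E]
    (hrefl : Function.Surjective (inclusionInDoubleDual ℝ E))
    (hdim : ¬ FiniteDimensional ℝ E)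
    (hKK : ∀ (x : ℕ → E) (y : E), (∀ n, ‖x n‖ = 1) → ‖y‖ = 1 →
      (∀ φ : StrongDual ℝ E, Tendsto (fun n => φ (x n)) atTop (𝓝 (φ y))) →
      Tendsto (fun n => ‖x n - y‖) atTop (𝓝 0))
    (φ : StrongDual ℝ E) (hφ : φ ≠ 0) :
    IsCompact {x : E | ‖x‖ = 1 ∧ φ x = ‖φ‖} := by
  have hφn : 0 < ‖φ‖ := norm_pos_iff.mpr hφ
  rw [isCompact_iff_isSeqCompact]
  intro x hx
  have hx1 : ∀ n, ‖x n‖ = 1 := fun n => (hx n).1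
  have hx2 : ∀ n, φ (x n) = ‖φ‖ := fun n => (hx n).2
  -- the closed span of the sequence
  set F : Submodule ℝ E := (Submodule.span ℝ (Set.range x)).topologicalClosure with hF
  have hFclosed : IsClosed (F : Set E) := Submodule.isClosed_topologicalClosure _
  have hxF : ∀ n, x n ∈ F :=
    fun n => Submodule.le_topologicalClosure _ (Submodule.subset_span ⟨n, rfl⟩)
  -- separability of F and a countable dense sequence
  have hsep : TopologicalSpace.IsSeparable (F : Set E) := by
    have h1 : TopologicalSpace.IsSeparable (Submodule.span ℝ (Set.range x) : Set E) :=
      (Set.countable_range x).isSeparable.span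
    rw [hF, Submodule.topologicalClosure_coe]
    exact h1.closure
  obtain ⟨c, hc_count, hc_sub⟩ := hsep
  obtain ⟨d, hd⟩ : ∃ d : ℕ → E, insert (0 : E) c = Set.range d :=
    Set.Countable.exists_eq_range (hc_count.insert 0) (Set.insert_nonempty 0 c)
  have hFd : (F : Set E) ⊆ closure (Set.range d) := by
    rw [← hd]
    exact hc_sub.trans (closure_mono (Set.subset_insert 0 c))
  -- a countable norming family
  have hfex : ∀ k, ∃ f : StrongDual ℝ E, ‖f‖ ≤ 1 ∧ (d k ≠ 0 → f (d k) = ‖d k‖) := by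
    intro k
    by_cases h : d k = 0
    · exact ⟨0, by simp, fun h' => absurd h h'⟩
    · obtain ⟨g, hg1, hg2⟩ := exists_dual_vector ℝ (d k) (norm_ne_zero_iff.mpr h)
      exact ⟨g, hg1.le, fun _ => hg2⟩
  choose f hf1 hf2 using hfex
  have hsepF : ∀ w : E, w ∈ F → (∀ k, f k w = 0) → w = 0 := by
    intro w hwF hfw
    by_contra hw
    have hwpos : 0 < ‖w‖ := norm_pos_iff.mpr hw
    obtain ⟨e, ⟨k, hk⟩, hdist⟩ := Metric.mem_closure_iff.mp (hFd hwF) (‖w‖ / 3) (by linarith)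
    subst hk
    have hdw : ‖d k - w‖ < ‖w‖ / 3 := by
      rw [← dist_eq_norm, dist_comm]
      exact hdist
    have hdk_norm : ‖w‖ - ‖w‖ / 3 < ‖d k‖ := by
      have := norm_sub_norm_le w (d k)
      have h2 : ‖w - d k‖ < ‖w‖ / 3 := by rwa [norm_sub_rev]
      linarith
    have hdk : d k ≠ 0 := by
      intro h0
      rw [h0, norm_zero] at hdk_norm
      linarith
    have heval : f k (d k) = ‖d k‖ := hf2 k hdk
    have hbound : |f k (d k - w)| ≤ ‖d k - w‖ := by
      calc |f k (d k - w)| ≤ ‖f k‖ * ‖d k - w‖ := (f k).le_opNorm _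
        _ ≤ 1 * ‖d k - w‖ := mul_le_mul_of_nonneg_right (hf1 k) (norm_nonneg _)
        _ = ‖d k - w‖ := one_mul _
    have : f k (d k - w) = f k (d k) := by rw [map_sub, hfw k, sub_zero]
    rw [this, heval] at hbound
    have : |(‖d k‖ : ℝ)| = ‖d k‖ := abs_of_nonneg (norm_nonneg _)
    rw [this] at hbound
    linarith
  -- extract a subsequence converging against the f k
  have hskey : ∀ n, (fun k => f k (x n)) ∈ Set.univ.pi fun _ : ℕ => Set.Icc (-1 : ℝ) 1 := by
    intro n
    rw [Set.mem_univ_pi]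
    intro k
    have : |f k (x n)| ≤ 1 := by
      calc |f k (x n)| ≤ ‖f k‖ * ‖x n‖ := (f k).le_opNorm _
        _ ≤ 1 * 1 := by
            apply mul_le_mul (hf1 k) (hx1 n).le (norm_nonneg _) zero_le_one
        _ = 1 := one_mul 1
    exact abs_le.mp this
  obtain ⟨ξ, hξ, g, hg_mono, hg_tend⟩ :=
    (isCompact_univ_pi fun _ : ℕ => isCompact_Icc).isSeqCompact hskey
  have hconv : ∀ k, Tendsto (fun n => f k (x (g n))) atTop (𝓝 (ξ k)) := by
    intro k
    have := (tendsto_pi_nhds.mp hg_tend) k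
    exact this
  -- weak cluster point of the subsequence
  obtain ⟨y, hynorm, hyclus⟩ := myKey E hrefl (x ∘ g) (fun n => (hx1 (g n)).le)
  -- membership of weak cluster points in F
  have memF : ∀ (v : ℕ → E), (∀ n, v n ∈ F) → ∀ z : E,
      (∀ ψ : StrongDual ℝ E, MapClusterPt (ψ z) atTop (fun n => ψ (v n))) → z ∈ F := by
    intro v hv z hz
    by_contra hzF
    obtain ⟨ψ, u0, hu1, hu2⟩ :=
      geometric_hahn_banach_closed_point (F.convex) hFclosed hzF
    have hψF : ∀ a ∈ F, ψ a = 0 := by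
      intro a ha
      by_contra hψa
      have : ((u0 + 1) / ψ a) * ψ a < u0 := by
        have := hu1 (((u0 + 1) / ψ a) • a) (F.smul_mem _ ha)
        simpa using this
      rw [div_mul_cancel₀ _ hψa] at this
      linarith
    have hu0pos : 0 < u0 := by
      have := hu1 0 F.zero_mem
      simpa using this
    have hψv : ∀ n, ψ (v n) = 0 := fun n => hψF _ (hv n)
    have : ψ z = 0 := by
      have htend : Tendsto (fun n => ψ (v n)) atTop (𝓝 0) := by
        simp only [hψv]
        exact tendsto_const_nhds
      exact myClusEq (hz ψ) htend
    rw [this] at hu2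
    linarith
  have hyF : y ∈ F := memF (x ∘ g) (fun n => hxF (g n)) y hyclus
  have hyf : ∀ k, f k y = ξ k := fun k => myClusEq (hyclus (f k)) (hconv k)
  -- full weak convergence of the subsequence to y
  have hweak : ∀ ψ : StrongDual ℝ E, Tendsto (fun n => ψ (x (g n))) atTop (𝓝 (ψ y)) := by
    intro ψ
    by_contra hcontra
    rw [Metric.tendsto_atTop] at hcontra
    push_neg at hcontra
    obtain ⟨δ, hδ, hfreq⟩ := hcontra
    have hfreq' : ∃ᶠ n in atTop, δ ≤ dist (ψ (x (g n))) (ψ y) := by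
      rw [Filter.frequently_atTop]
      intro N
      obtain ⟨n, hn1, hn2⟩ := hfreq N
      exact ⟨n, hn1, hn2⟩
    obtain ⟨h, hh_mono, hh⟩ := Filter.extraction_of_frequently_atTop hfreq'
    obtain ⟨z, hznorm, hzclus⟩ := myKey E hrefl (x ∘ g ∘ h) (fun n => (hx1 (g (h n))).le)
    have hzF : z ∈ F := memF (x ∘ g ∘ h) (fun n => hxF (g (h n))) z hzclus
    have hzf : ∀ k, f k z = ξ k := by
      intro k
      refine myClusEq (hzclus (f k)) ?_
      exact (hconv k).comp hh_mono.tendsto_atTop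
    have hzy : z = y := by
      have hdiff : z - y ∈ F := F.sub_mem hzF hyF
      have : ∀ k, f k (z - y) = 0 := by
        intro k
        rw [map_sub, hzf k, hyf k, sub_self]
      have := hsepF (z - y) hdiff this
      exact sub_eq_zero.mp this
    have hC : IsClosed {t : ℝ | δ ≤ dist t (ψ y)} :=
      isClosed_le continuous_const (continuous_id.dist continuous_const)
    have hmem : ψ z ∈ {t : ℝ | δ ≤ dist t (ψ y)} :=
      myClusMem hC (fun n => hh n) (hzclus ψ)
    rw [hzy] at hmem
    simp only [Set.mem_setOf_eq, dist_self] at hmem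
    linarith
  -- y has norm 1
  have hφy : φ y = ‖φ‖ := by
    have h1 := hweak φ
    have h2 : Tendsto (fun n => φ (x (g n))) atTop (𝓝 ‖φ‖) := by
      simp only [hx2]
      exact tendsto_const_nhds
    exact tendsto_nhds_unique h1 h2
  have hy1 : ‖y‖ = 1 := by
    have hle1 : ‖φ‖ ≤ ‖φ‖ * ‖y‖ := by
      calc ‖φ‖ = φ y := hφy.symm
        _ ≤ |φ y| := le_abs_self _
        _ ≤ ‖φ‖ * ‖y‖ := φ.le_opNorm y
    have : 1 ≤ ‖y‖ := by
      by_contra hlt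
      push_neg at hlt
      nlinarith
    linarith [hynorm]
  -- conclude via Kadec-Klee
  have hnormconv := hKK (x ∘ g) y (fun n => hx1 (g n)) hy1 hweak
  refine ⟨y, ⟨hy1, hφy⟩, g, hg_mono, ?_⟩
  rw [tendsto_iff_norm_sub_tendsto_zero]
  exact hnormconv
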